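/- Let U ⊆ ℝ^m be open, k ∈ ℕ ∪ {∞}, and A : U → Matrix (Fin n) (Fin n) ℝ a C^k map such that A(x) is symmetric for every x ∈ U and the rank of A(x) is constant on U. Then there exists a C^k map B : U → Matrix (Fin n) (Fin n) ℝ such that for every x ∈ U the matrix B(x) satisfies the Moore–Penrose identities with A(x): A(x) B(x) A(x) = A(x), B(x) A(x) B(x) = B(x), and A(x) B(x) and B(x) A(x) are symmetric. -/
import Mathlib
open Polynomial Matrix Finset

namespace MPaux
variable {n : ℕ}

lemma charpoly_conj (V N W : Matrix (Fin n) (Fin n) ℝ) (h1 : V * W = 1) (h2 : W * V = 1) :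
    (V * N * W).charpoly = N.charpoly := by
  have hone : V.map (C : ℝ → ℝ[X]) * W.map (C : ℝ → ℝ[X]) = 1 := by
    rw [← Matrix.map_mul, h1, Matrix.map_one _ (map_zero C) (map_one C)]
  have hcm : charmatrix (V * N * W) =
      V.map (C : ℝ → ℝ[X]) * charmatrix N * W.map (C : ℝ → ℝ[X]) := by
    simp only [charmatrix, mul_sub, sub_mul, RingHom.mapMatrix_apply]
    congr 1
    · rw [mul_assoc, (scalar_commute (X : ℝ[X]) (fun r' => Commute.all _ _) (W.map C)).eq,
        ← mul_assoc, hone, one_mul]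
    · rw [← Matrix.map_mul, ← Matrix.map_mul]
  have hdet : (V.map (C : ℝ → ℝ[X])).det * (W.map (C : ℝ → ℝ[X])).det = 1 := by
    rw [← det_mul, hone, det_one]
  rw [Matrix.charpoly, hcm, det_mul, det_mul, mul_right_comm, hdet, one_mul, Matrix.charpoly]

lemma charpoly_diagonal (d : Fin n → ℝ) :
    (diagonal d).charpoly = ∏ j, (X - C (d j)) := by
  have : charmatrix (diagonal d) = diagonal (fun j => X - C (d j)) := by
    ext i j
    by_cases h : i = j
    · subst h; simp
    · simp [h, charmatrix_apply_ne _ _ _ h, diagonal_apply_ne _ h]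
  rw [Matrix.charpoly, this, det_diagonal]

lemma conj_pow (V D W : Matrix (Fin n) (Fin n) ℝ) (h1 : V * W = 1) (h2 : W * V = 1) (K : ℕ) :
    (V * D * W) ^ K = V * D ^ K * W := by
  induction K with
  | zero => simp [h1]
  | succ K ih =>
      rw [pow_succ, ih, pow_succ]
      calc V * D ^ K * W * (V * D * W) = V * D ^ K * (W * V) * D * W := by
            simp only [Matrix.mul_assoc]
          _ = V * (D ^ K * D) * W := by rw [h2]; simp only [Matrix.mul_one, Matrix.mul_assoc]

lemma key (M : Matrix (Fin n) (Fin n) ℝ) (hM : M.IsSymm) (r : ℕ) (hr : M.rank = r)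
    (b : ℕ → ℝ) (hbdef : b = fun i => ((M ^ 2).charpoly).coeff (n - i))
    (Bm : Matrix (Fin n) (Fin n) ℝ)
    (hBdef : Bm = (-(b r)⁻¹) • ∑ i ∈ Finset.range r, b i • M ^ (2 * (r - i) - 1)) :
    b r ≠ 0 ∧ M * Bm * M = M ∧ Bm * M * Bm = Bm ∧ Bm.IsSymm ∧ M * Bm = Bm * M := by
  classical
  have hH : M.IsHermitian := by
    rwa [Matrix.IsHermitian, conjTranspose_eq_transpose_of_trivial]
  set V : Matrix (Fin n) (Fin n) ℝ := (hH.eigenvectorUnitary : Matrix (Fin n) (Fin n) ℝ) with hV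
  set W : Matrix (Fin n) (Fin n) ℝ := star (hH.eigenvectorUnitary : Matrix (Fin n) (Fin n) ℝ)
    with hW
  have hVW : V * W = 1 := by
    simpa [hV, hW] using (Matrix.mem_unitaryGroup_iff).mp hH.eigenvectorUnitary.2
  have hWV : W * V = 1 := by
    simpa [hV, hW] using (Matrix.mem_unitaryGroup_iff').mp hH.eigenvectorUnitary.2
  set lam : Fin n → ℝ := hH.eigenvalues with hlam
  have hspec : M = V * diagonal lam * W := by
    have := hH.spectral_theorem
    simpa [hV, hW, hlam, Function.comp] using this
  -- charpoly of M^2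
  have hM2 : M ^ 2 = V * diagonal (fun j => lam j ^ 2) * W := by
    rw [hspec, conj_pow V _ W hVW hWV, diagonal_pow]
    rfl
  have hcp : (M ^ 2).charpoly = ∏ j, (X - C (lam j ^ 2)) := by
    rw [hM2, charpoly_conj _ _ _ hVW hWV, charpoly_diagonal]
  -- the nonzero eigenvalue set
  set S : Finset (Fin n) := Finset.univ.filter (fun j => lam j ≠ 0) with hS
  have hcard : S.card = r := by
    have h2 := hH.rank_eq_card_non_zero_eigs
    rw [hr] at h2
    rw [hS, ← Fintype.card_subtype]
    exact h2.symm
  have hrn : r ≤ n := by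
    rw [← hcard]
    simpa using Finset.card_le_card (Finset.subset_univ S)
  set g : ℝ[X] := ∏ j ∈ S, (X - C (lam j ^ 2)) with hg
  have hsplit : (M ^ 2).charpoly = X ^ (n - r) * g := by
    rw [hcp, ← Finset.prod_filter_mul_prod_filter_not Finset.univ (fun j => lam j ≠ 0)]
    rw [mul_comm]
    congr 1
    calc (∏ j ∈ Finset.univ.filter (fun j => ¬ lam j ≠ 0), (X - C (lam j ^ 2)))
        = ∏ j ∈ Finset.univ.filter (fun j => ¬ lam j ≠ 0), (X : ℝ[X]) := by
          apply Finset.prod_congr rfl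
          intro j hj
          simp only [Finset.mem_filter, not_not] at hj
          rw [hj.2]
          simp
      _ = X ^ (n - r) := by
          rw [Finset.prod_const]
          congr 1
          have h3 : S.card + (Finset.univ.filter (fun j => ¬ lam j ≠ 0)).card = n := by
            simpa [hS] using Finset.card_filter_add_card_filter_not (s := Finset.univ)
              (p := fun j => lam j ≠ 0)
          omega
  have hgmonic : g.Monic := monic_prod_of_monic _ _ (fun j _ => monic_X_sub_C _)
  have hgdeg : g.natDegree = r := by
    rw [hg, natDegree_prod_of_monic _ _ (fun j _ => monic_X_sub_C _)]
    rw [Finset.sum_congr rfl (fun j _ => natDegree_X_sub_C (lam j ^ 2))]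
    simp [hcard]
  have hbg : ∀ i, i ≤ r → b i = g.coeff (r - i) := by
    intro i hi
    rw [hbdef]
    simp only
    rw [hsplit]
    have : n - i = (r - i) + (n - r) := by omega
    rw [this, coeff_X_pow_mul]
  have hbr : b r ≠ 0 := by
    rw [hbg r le_rfl]
    simp only [Nat.sub_self]
    rw [coeff_zero_eq_eval_zero, hg, eval_prod]
    rw [Finset.prod_ne_zero_iff]
    intro j hj
    simp only [eval_sub, eval_X, eval_C, zero_sub, ne_eq, neg_eq_zero]
    rw [hS, Finset.mem_filter] at hj
    exact pow_ne_zero _ hj.2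
  -- root relation
  have hroot : ∀ j, lam j ≠ 0 → ∑ i ∈ Finset.range r, b i * (lam j ^ 2) ^ (r - i) = -(b r) := by
    intro j hj
    have hjS : j ∈ S := by simp [hS, hj]
    have hev : g.eval (lam j ^ 2) = 0 := by
      rw [hg, eval_prod]
      apply Finset.prod_eq_zero hjS
      simp
    have hev2 : ∑ i ∈ Finset.range (r + 1), g.coeff i * (lam j ^ 2) ^ i = 0 := by
      rw [← hev, eval_eq_sum_range, hgdeg]
    have hrefl : ∑ i ∈ Finset.range (r + 1), b i * (lam j ^ 2) ^ (r - i) = 0 := by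
      calc ∑ i ∈ Finset.range (r + 1), b i * (lam j ^ 2) ^ (r - i)
          = ∑ i ∈ Finset.range (r + 1), g.coeff (r - i) * (lam j ^ 2) ^ (r - i) := by
            apply Finset.sum_congr rfl
            intro i hi
            rw [hbg i (by simp at hi; omega)]
        _ = ∑ i ∈ Finset.range (r + 1), g.coeff i * (lam j ^ 2) ^ i := by
            have := Finset.sum_range_reflect (fun i => g.coeff i * (lam j ^ 2) ^ i) (r + 1)
            simpa using this
        _ = 0 := hev2
    rw [Finset.sum_range_succ] at hrefl
    simp only [Nat.sub_self, pow_zero, mul_one] at hrefl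
    linarith
  -- the diagonal entries of the candidate pseudo-inverse
  set d : Fin n → ℝ := fun j => -(b r)⁻¹ * ∑ i ∈ Finset.range r, b i * lam j ^ (2 * (r - i) - 1)
    with hd
  have hd0 : ∀ j, lam j = 0 → d j = 0 := by
    intro j hj
    rw [hd]
    simp only [hj]
    have : ∑ i ∈ Finset.range r, b i * (0:ℝ) ^ (2 * (r - i) - 1) = 0 := by
      apply Finset.sum_eq_zero
      intro i hi
      rw [Finset.mem_range] at hi
      rw [zero_pow (by omega)]
      ring
    rw [this]
    ring
  have hd1 : ∀ j, lam j ≠ 0 → lam j * d j = 1 := by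
    intro j hj
    have step : ∀ i ∈ Finset.range r, b i * (lam j ^ 2) ^ (r - i)
        = lam j * (b i * lam j ^ (2 * (r - i) - 1)) := by
      intro i hi
      rw [Finset.mem_range] at hi
      have e1 : (lam j ^ 2) ^ (r - i) = lam j ^ (2 * (r - i) - 1) * lam j := by
        rw [← pow_succ, ← pow_mul]
        congr 1
        omega
      rw [e1]
      ring
    have : lam j * d j = -(b r)⁻¹ * ∑ i ∈ Finset.range r, b i * (lam j ^ 2) ^ (r - i) := by
      rw [hd, Finset.sum_congr rfl step, ← Finset.mul_sum]
      ring
    rw [this, hroot j hj]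
    field_simp
  -- conjugation form of Bm
  have hpowM : ∀ e : ℕ, M ^ e = V * diagonal (fun j => lam j ^ e) * W := by
    intro e
    rw [hspec, conj_pow _ _ _ hVW hWV, diagonal_pow]
    rfl
  have hconj_smul : ∀ (c : ℝ) (D : Matrix (Fin n) (Fin n) ℝ),
      c • (V * D * W) = V * (c • D) * W := by
    intro c D
    rw [Matrix.mul_smul, Matrix.smul_mul]
  have hBm : Bm = V * diagonal d * W := by
    rw [hBdef]
    have h1 : ∀ i ∈ Finset.range r, b i • M ^ (2 * (r - i) - 1) =
        V * (b i • diagonal (fun j => lam j ^ (2 * (r - i) - 1))) * W := by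
      intro i _
      rw [hpowM, hconj_smul]
    rw [Finset.sum_congr rfl h1]
    rw [← Finset.sum_mul, ← Matrix.mul_sum, hconj_smul]
    congr 1
    congr 1
    ext a c
    by_cases hac : a = c
    · subst hac
      simp only [Matrix.smul_apply, Matrix.sum_apply, diagonal_apply_eq, smul_eq_mul, hd,
        Finset.mul_sum]
    · simp [Matrix.smul_apply, Matrix.sum_apply, diagonal_apply_ne _ hac]
  have hmulVW : ∀ P Q : Matrix (Fin n) (Fin n) ℝ,
      (V * P * W) * (V * Q * W) = V * (P * Q) * W := by
    intro P Q
    calc (V * P * W) * (V * Q * W) = V * P * (W * V) * Q * W := by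
          simp only [Matrix.mul_assoc]
      _ = V * (P * Q) * W := by rw [hWV]; simp only [Matrix.mul_one, Matrix.mul_assoc]
  have hDED : diagonal lam * diagonal d * diagonal lam = diagonal lam := by
    rw [diagonal_mul_diagonal, diagonal_mul_diagonal]
    refine congrArg _ (funext fun j => ?_)
    by_cases hj : lam j = 0
    · simp [hj]
    · rw [hd1 j hj, one_mul]
  have hEDE : diagonal d * diagonal lam * diagonal d = diagonal d := by
    rw [diagonal_mul_diagonal, diagonal_mul_diagonal]
    refine congrArg _ (funext fun j => ?_)
    by_cases hj : lam j = 0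
    · simp [hd0 j hj]
    · have h5 : d j * lam j * d j = (lam j * d j) * d j := by ring
      rw [h5, hd1 j hj, one_mul]
  refine ⟨hbr, ?_, ?_, ?_, ?_⟩
  · rw [hBm]
    conv_lhs => rw [hspec]
    rw [hmulVW, hmulVW, hDED, ← hspec]
  · rw [hBm]
    conv_lhs => rw [hspec]
    rw [hmulVW, hmulVW, hEDE, ← hBm]
  · show Bmᵀ = Bm
    rw [hBdef]
    rw [Matrix.transpose_smul, Matrix.transpose_sum]
    congr 1
    apply Finset.sum_congr rfl
    intro i _
    rw [Matrix.transpose_smul, Matrix.transpose_pow, hM.eq]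
  · have : Commute M Bm := by
      rw [hBdef]
      exact (Commute.sum_right _ _ _ fun i _ =>
        ((Commute.refl M).pow_right _).smul_right _).smul_right _
    exact this.eq

lemma contDiffOn_eval {m : ℕ} {U : Set (Fin m → ℝ)} {k : ℕ∞}
    {A : (Fin m → ℝ) → Matrix (Fin n) (Fin n) ℝ}
    (hA : ∀ i j, ContDiffOn ℝ k (fun x => A x i j) U)
    (q : MvPolynomial (Fin n × Fin n) ℝ) :
    ContDiffOn ℝ k (fun x => MvPolynomial.eval (fun p => A x p.1 p.2) q) U := by
  induction q using MvPolynomial.induction_on with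
  | C a => simpa using contDiffOn_const
  | add p q hp hq => simpa [map_add] using hp.add hq
  | mul_X p i hp => simpa [_root_.map_mul, MvPolynomial.eval_X] using hp.mul (hA i.1 i.2)

lemma matrix_eq_map {m : ℕ} (A : (Fin m → ℝ) → Matrix (Fin n) (Fin n) ℝ) (x : Fin m → ℝ) :
    A x = (mvPolynomialX (Fin n) (Fin n) ℝ).map
      (MvPolynomial.eval (fun p : (Fin n) × (Fin n) => A x p.1 p.2)) :=
  (mvPolynomialX_map_eval₂ _ (A x)).symm

lemma pow_entry_eval {m : ℕ} (A : (Fin m → ℝ) → Matrix (Fin n) (Fin n) ℝ) (x : Fin m → ℝ)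
    (K : ℕ) (i j : Fin n) :
    (A x ^ K) i j = MvPolynomial.eval (fun p : (Fin n) × (Fin n) => A x p.1 p.2)
      ((mvPolynomialX (Fin n) (Fin n) ℝ ^ K) i j) := by
  set e := (MvPolynomial.eval (fun p : (Fin n) × (Fin n) => A x p.1 p.2) :
    MvPolynomial ((Fin n) × (Fin n)) ℝ →+* ℝ) with he
  have h1 : A x = e.mapMatrix (mvPolynomialX (Fin n) (Fin n) ℝ) :=
    (mvPolynomialX_mapMatrix_eval (A x)).symm
  rw [h1, ← map_pow, RingHom.mapMatrix_apply, Matrix.map_apply]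

lemma coeff_charpoly_sq_eval {m : ℕ} (A : (Fin m → ℝ) → Matrix (Fin n) (Fin n) ℝ)
    (x : Fin m → ℝ) (t : ℕ) :
    ((A x ^ 2).charpoly).coeff t = MvPolynomial.eval (fun p : (Fin n) × (Fin n) => A x p.1 p.2)
      (((mvPolynomialX (Fin n) (Fin n) ℝ ^ 2).charpoly).coeff t) := by
  set e := (MvPolynomial.eval (fun p : (Fin n) × (Fin n) => A x p.1 p.2) :
    MvPolynomial ((Fin n) × (Fin n)) ℝ →+* ℝ) with he
  have h1 : A x = e.mapMatrix (mvPolynomialX (Fin n) (Fin n) ℝ) :=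
    (mvPolynomialX_mapMatrix_eval (A x)).symm
  rw [h1, ← map_pow, RingHom.mapMatrix_apply, charpoly_map, coeff_map]

end MPaux

/-- Smoothness of the Moore–Penrose inverse of a symmetric matrix family of constant rank. -/
theorem contDiffOn_moorePenrose {m n : ℕ} (U : Set (Fin m → ℝ)) (hU : IsOpen U)
    (k : ℕ∞) (A : (Fin m → ℝ) → Matrix (Fin n) (Fin n) ℝ)
    (hA : ∀ i j, ContDiffOn ℝ k (fun x => A x i j) U)
    (hsymm : ∀ x ∈ U, (A x).IsSymm)
    (r : ℕ) (hrank : ∀ x ∈ U, (A x).rank = r) :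
    ∃ B : (Fin m → ℝ) → Matrix (Fin n) (Fin n) ℝ,
      (∀ i j, ContDiffOn ℝ k (fun x => B x i j) U) ∧
      ∀ x ∈ U, A x * B x * A x = A x ∧ B x * A x * B x = B x ∧
        (A x * B x).IsSymm ∧ (B x * A x).IsSymm := by
  classical
  -- coefficient functions
  set c : ℕ → (Fin m → ℝ) → ℝ := fun i x => ((A x ^ 2).charpoly).coeff (n - i) with hc
  set B : (Fin m → ℝ) → Matrix (Fin n) (Fin n) ℝ :=
    fun x => (-(c r x)⁻¹) • ∑ i ∈ Finset.range r, c i x • (A x) ^ (2 * (r - i) - 1) with hB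
  have hkey : ∀ x ∈ U, c r x ≠ 0 ∧ A x * B x * A x = A x ∧ B x * A x * B x = B x ∧
      (B x).IsSymm ∧ A x * B x = B x * A x := by
    intro x hx
    exact MPaux.key (A x) (hsymm x hx) r (hrank x hx) (fun i => c i x) rfl (B x) rfl
  refine ⟨B, ?_, ?_⟩
  · -- smoothness
    have hcs : ∀ i, ContDiffOn ℝ k (c i) U := by
      intro i
      have : c i = fun x => MvPolynomial.eval (fun p : (Fin n) × (Fin n) => A x p.1 p.2)
          (((Matrix.mvPolynomialX (Fin n) (Fin n) ℝ ^ 2).charpoly).coeff (n - i)) := by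
        funext x
        exact MPaux.coeff_charpoly_sq_eval A x (n - i)
      rw [this]
      exact MPaux.contDiffOn_eval hA _
    have hps : ∀ (K : ℕ) (i j : Fin n), ContDiffOn ℝ k (fun x => (A x ^ K) i j) U := by
      intro K i j
      have : (fun x => (A x ^ K) i j) = fun x =>
          MvPolynomial.eval (fun p : (Fin n) × (Fin n) => A x p.1 p.2)
          ((Matrix.mvPolynomialX (Fin n) (Fin n) ℝ ^ K) i j) := by
        funext x
        exact MPaux.pow_entry_eval A x K i j
      rw [this]
      exact MPaux.contDiffOn_eval hA _
    intro i j
    have hentry : (fun x => B x i j) = fun x =>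
        (-(c r x)⁻¹) * ∑ i' ∈ Finset.range r, c i' x * (A x ^ (2 * (r - i') - 1)) i j := by
      funext x
      rw [hB]
      simp [Matrix.smul_apply, Matrix.sum_apply, smul_eq_mul]
    rw [hentry]
    apply ContDiffOn.mul
    · exact ((hcs r).inv (fun x hx => (hkey x hx).1)).neg
    · exact ContDiffOn.sum fun i' _ => (hcs i').mul (hps _ i j)
  · -- identities
    intro x hx
    obtain ⟨-, h1, h2, h3, h4⟩ := hkey x hx
    refine ⟨h1, h2, ?_, ?_⟩
    · show (A x * B x)ᵀ = A x * B x
      rw [Matrix.transpose_mul, h3.eq, (hsymm x hx).eq, h4]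
    · show (B x * A x)ᵀ = B x * A x
      rw [Matrix.transpose_mul, h3.eq, (hsymm x hx).eq, h4]
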